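/- Let n = 2m and K_n have probability mass function p(r) = 2^{-(2m-r)}·C(2m-r, m) for r ∈ {0,...,m}. A random variable X with support {0,...,m} has this distribution if and only if for every function g : ℤ → ℝ with g(-1) = 0 one has E[(2m - X + 1)(g(X) - g(X-1)) - (X+1)g(X)] = 0. -/

import Mathlib

open MeasureTheory

/-- The pmf of the number of returns to the origin of simple random walk up to time `2m`:
`p r = 2^{-(2m-r)} * C(2m-r, m)`. -/
noncomputable def returnsPMF (m r : ℕ) : ℝ := (Nat.choose (2*m - r) m : ℝ) / 2^(2*m - r)

open Finset

lemma sum_choose_half (n : ℕ) :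
    ∑ k ∈ range (n+1), (Nat.choose (n+k) k : ℝ) * (2:ℝ)⁻¹ ^ k = 2 ^ n := by
  induction n with
  | zero => simp
  | succ n ih =>
    have c1c2 : Nat.choose (2*n+2) (n+1) = 2 * Nat.choose (2*n+1) (n+1) := by
      have h1 : Nat.choose (2*n+2) (n+1) = Nat.choose (2*n+1) n + Nat.choose (2*n+1) (n+1) := by
        have := Nat.choose_succ_succ (2*n+1) n
        simpa [show 2*n+1+1 = 2*n+2 by ring] using this
      have h2 : Nat.choose (2*n+1) n = Nat.choose (2*n+1) (n+1) := by
        have := Nat.choose_symm (show n+1 ≤ 2*n+1 by omega)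
        simpa [show 2*n+1 - (n+1) = n by omega] using this
      omega
    have hc : (Nat.choose (2*n+2) (n+1) : ℝ) = 2 * (Nat.choose (2*n+1) (n+1) : ℝ) := by
      exact_mod_cast congrArg (Nat.cast (R := ℝ)) c1c2
    have key : ∑ k ∈ range (n+2), (Nat.choose (n+1+k) k : ℝ) * (2:ℝ)⁻¹ ^ k
        = 2 * ∑ k ∈ range (n+1), (Nat.choose (n+k) k : ℝ) * (2:ℝ)⁻¹ ^ k := by
      have e1 : ∑ k ∈ range (n+2), (Nat.choose (n+1+k) k : ℝ) * (2:ℝ)⁻¹ ^ k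
          = (∑ j ∈ range (n+1), (Nat.choose (n+2+j) (j+1) : ℝ) * (2:ℝ)⁻¹ ^ (j+1)) + 1 := by
        rw [Finset.sum_range_succ']
        simp only [Nat.choose_zero_right, Nat.cast_one, pow_zero, mul_one]
        congr 1
        refine Finset.sum_congr rfl fun j _ => ?_
        rw [show n+1+(j+1) = n+2+j by ring]
      have e2 : ∀ j : ℕ, (Nat.choose (n+2+j) (j+1) : ℝ)
          = (Nat.choose (n+1+j) j : ℝ) + (Nat.choose (n+1+j) (j+1) : ℝ) := by
        intro j
        have := Nat.choose_succ_succ (n+1+j) j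
        rw [show (n+1+j).succ = n+2+j by omega] at this
        push_cast [this, Nat.succ_eq_add_one]
        ring
      have eA : ∑ j ∈ range (n+1), (Nat.choose (n+1+j) j : ℝ) * (2:ℝ)⁻¹ ^ (j+1)
          = (2:ℝ)⁻¹ * (∑ k ∈ range (n+2), (Nat.choose (n+1+k) k : ℝ) * (2:ℝ)⁻¹ ^ k
              - (Nat.choose (2*n+2) (n+1) : ℝ) * (2:ℝ)⁻¹ ^ (n+1)) := by
        have hS : ∑ k ∈ range (n+2), (Nat.choose (n+1+k) k : ℝ) * (2:ℝ)⁻¹ ^ k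
            = (∑ j ∈ range (n+1), (Nat.choose (n+1+j) j : ℝ) * (2:ℝ)⁻¹ ^ j)
              + (Nat.choose (2*n+2) (n+1) : ℝ) * (2:ℝ)⁻¹ ^ (n+1) := by
          rw [Finset.sum_range_succ, show n+1+(n+1) = 2*n+2 by ring]
        rw [hS, add_sub_cancel_right, Finset.mul_sum]
        exact Finset.sum_congr rfl fun j _ => by ring
      have eB : ∑ j ∈ range (n+1), (Nat.choose (n+1+j) (j+1) : ℝ) * (2:ℝ)⁻¹ ^ (j+1)
          = (∑ k ∈ range (n+1), (Nat.choose (n+k) k : ℝ) * (2:ℝ)⁻¹ ^ k)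
            + (Nat.choose (2*n+1) (n+1) : ℝ) * (2:ℝ)⁻¹ ^ (n+1) - 1 := by
        have hS : ∑ k ∈ range (n+2), (Nat.choose (n+k) k : ℝ) * (2:ℝ)⁻¹ ^ k
            = (∑ j ∈ range (n+1), (Nat.choose (n+(j+1)) (j+1) : ℝ) * (2:ℝ)⁻¹ ^ (j+1)) + 1 := by
          rw [Finset.sum_range_succ']
          simp
        have hS2 : ∑ k ∈ range (n+2), (Nat.choose (n+k) k : ℝ) * (2:ℝ)⁻¹ ^ k
            = (∑ k ∈ range (n+1), (Nat.choose (n+k) k : ℝ) * (2:ℝ)⁻¹ ^ k)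
              + (Nat.choose (2*n+1) (n+1) : ℝ) * (2:ℝ)⁻¹ ^ (n+1) := by
          rw [Finset.sum_range_succ, show n+(n+1) = 2*n+1 by ring]
        have : ∑ j ∈ range (n+1), (Nat.choose (n+1+j) (j+1) : ℝ) * (2:ℝ)⁻¹ ^ (j+1)
            = ∑ j ∈ range (n+1), (Nat.choose (n+(j+1)) (j+1) : ℝ) * (2:ℝ)⁻¹ ^ (j+1) := by
          refine Finset.sum_congr rfl fun j _ => by rw [show n+(j+1) = n+1+j by ring]
        rw [this]
        linarith [hS, hS2]
      have esplit : ∑ j ∈ range (n+1), (Nat.choose (n+2+j) (j+1) : ℝ) * (2:ℝ)⁻¹ ^ (j+1)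
          = (∑ j ∈ range (n+1), (Nat.choose (n+1+j) j : ℝ) * (2:ℝ)⁻¹ ^ (j+1))
            + ∑ j ∈ range (n+1), (Nat.choose (n+1+j) (j+1) : ℝ) * (2:ℝ)⁻¹ ^ (j+1) := by
        rw [← Finset.sum_add_distrib]
        exact Finset.sum_congr rfl fun j _ => by rw [e2]; ring
      rw [esplit, eA, eB, hc] at e1
      linarith [e1]
    rw [show n+1+1 = n+2 from rfl, key, ih]
    ring

lemma sum_returnsPMF (m : ℕ) : ∑ r ∈ range (m+1), returnsPMF m r = 1 := by
  have := Finset.sum_range_reflect (fun r => returnsPMF m r) (m+1)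
  rw [← this]
  have e : ∀ k ∈ range (m+1), returnsPMF m (m+1-1-k)
      = ((Nat.choose (m+k) k : ℝ) * (2:ℝ)⁻¹ ^ k) * (2:ℝ)⁻¹ ^ m := by
    intro k hk
    rw [Finset.mem_range] at hk
    have h1 : 2*m - (m+1-1-k) = m + k := by omega
    have h2 : Nat.choose (m+k) m = Nat.choose (m+k) k := by
      have := Nat.choose_symm (show k ≤ m+k by omega)
      simpa [show m+k-k = m by omega] using this
    rw [returnsPMF, h1, h2, pow_add]
    field_simp
    rw [one_div_pow, one_div_pow]
    field_simp
    try exact Or.inl (by ring)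
  rw [Finset.sum_congr rfl e, ← Finset.sum_mul, sum_choose_half]
  simp

lemma nat_choose_rec (n k : ℕ) : (n + 1 - k) * Nat.choose (n+1) k = (n+1) * Nat.choose n k := by
  have h1 := Nat.add_one_mul_choose_eq n k
  have h2 := Nat.choose_succ_right_eq (n+1) k
  calc (n + 1 - k) * Nat.choose (n+1) k = Nat.choose (n+1) k * (n+1-k) := Nat.mul_comm _ _
    _ = Nat.choose (n+1) (k+1) * (k+1) := h2.symm
    _ = (n+1) * Nat.choose n k := h1.symm

lemma pmf_rec (m : ℕ) (hm : 0 < m) (r : ℕ) (hr : r ≤ m) :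
    (2*(m:ℝ) - 2*r) * returnsPMF m r = (2*(m:ℝ) - r) * returnsPMF m (r+1) := by
  rcases eq_or_lt_of_le hr with h | h
  · subst h
    have hz : Nat.choose (2*r - (r+1)) r = 0 :=
      Nat.choose_eq_zero_of_lt (by omega)
    simp [returnsPMF, hz]
  · set n := 2*m - r - 1 with hn
    have h1 : 2*m - r = n + 1 := by omega
    have h2 : 2*m - (r+1) = n := by omega
    have hnm : m ≤ n + 1 := by omega
    have key : ((n:ℝ) + 1 - m) * (Nat.choose (n+1) m : ℝ) = ((n:ℝ)+1) * (Nat.choose n m : ℝ) := by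
      have := congrArg (Nat.cast (R := ℝ)) (nat_choose_rec n m)
      push_cast [Nat.cast_sub hnm] at this
      linarith
    have hcn : (n : ℝ) = 2*m - r - 1 := by
      rw [hn]
      push_cast [Nat.cast_sub (show 1 ≤ 2*m - r by omega), Nat.cast_sub (show r ≤ 2*m by omega)]
      ring
    have h2m : (2*(m:ℝ) - r) = (n:ℝ) + 1 := by rw [hcn]; ring
    have h2m2 : (2*(m:ℝ) - 2*r) = 2*((n:ℝ) + 1 - m) := by rw [hcn]; ring
    rw [returnsPMF, returnsPMF, h1, h2, h2m, h2m2, pow_succ]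
    have hp : (2:ℝ)^n ≠ 0 := by positivity
    field_simp
    linear_combination key

lemma integral_eq_sum (m : ℕ) (ν : Measure ℤ) [IsProbabilityMeasure ν]
    (hsupp : ∀ k : ℤ, ν {k} ≠ 0 ↔ k ∈ Set.Icc (0:ℤ) (m:ℤ)) (f : ℤ → ℝ) :
    ∫ k, f k ∂ν = ∑ r ∈ range (m+1), (ν {(r:ℤ)}).toReal * f (r:ℤ) := by
  classical
  set s : Finset ℤ := Finset.Icc 0 (m:ℤ) with hs
  have hcompl : ν (↑s)ᶜ = 0 := by
    rw [measure_null_iff_singleton (Set.to_countable _)]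
    intro x hx
    by_contra hne
    have := (hsupp x).mp hne
    apply hx
    simpa [hs] using this
  have hrestrict : ν.restrict ↑s = ν := by
    apply Measure.restrict_eq_self_of_ae_mem
    rw [MeasureTheory.ae_iff]
    exact hcompl
  have hint : IntegrableOn f ↑s ν := by
    have hc : (↑s : Set ℤ) = ⋃ x ∈ s, {x} := (Set.biUnion_of_singleton _).symm
    rw [hc, integrableOn_finset_iUnion]
    intro i _
    exact (integrableOn_singleton_iff (by simp)).mpr (Or.inr (measure_lt_top ν _))
  have hmap : s = (Finset.range (m+1)).map ⟨((↑) : ℕ → ℤ), Nat.cast_injective⟩ := by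
    ext x
    simp only [hs, Finset.mem_Icc, Finset.mem_map, Finset.mem_range,
      Function.Embedding.coeFn_mk]
    constructor
    · rintro ⟨h0, h1⟩
      exact ⟨x.toNat, by omega, by omega⟩
    · rintro ⟨r, hr, rfl⟩
      omega
  calc ∫ k, f k ∂ν = ∫ k in (↑s : Set ℤ), f k ∂ν := by rw [hrestrict]
    _ = ∑ x ∈ s, (ν {x}).toReal • f x := integral_finset s hint
    _ = ∑ r ∈ range (m+1), (ν {(r:ℤ)}).toReal * f (r:ℤ) := by
        rw [hmap, Finset.sum_map]
        simp [smul_eq_mul]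

theorem stmt15 (m : ℕ) (hm : 0 < m) (ν : Measure ℤ) [IsProbabilityMeasure ν]
    (hsupp : ∀ k : ℤ, ν {k} ≠ 0 ↔ k ∈ Set.Icc (0:ℤ) (m:ℤ)) :
    (∀ r : ℕ, r ≤ m → (ν {(r:ℤ)}).toReal = returnsPMF m r) ↔
      ∀ g : ℤ → ℝ, g (-1) = 0 →
        ∫ k, ((2*(m:ℝ) - (k:ℝ) + 1) * (g k - g (k-1)) - ((k:ℝ) + 1) * g k) ∂ν = 0 := by
  constructor
  · -- forward
    intro hq g hg
    rw [integral_eq_sum m ν hsupp]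
    set H : ℕ → ℝ := fun r => (2*(m:ℝ) - r + 1) * returnsPMF m r * g ((r:ℤ) - 1) with hH
    have hterm : ∀ r ∈ range (m+1),
        (ν {(r:ℤ)}).toReal * ((2*(m:ℝ) - ((r:ℤ):ℝ) + 1) * (g (r:ℤ) - g ((r:ℤ)-1))
          - (((r:ℤ):ℝ) + 1) * g (r:ℤ)) = H (r+1) - H r := by
      intro r hr
      rw [Finset.mem_range] at hr
      have hrle : r ≤ m := by omega
      rw [hq r hrle, hH]
      have harg : (((r+1:ℕ)):ℤ) - 1 = (r:ℤ) := by push_cast; ring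
      simp only [harg]
      have key := pmf_rec m hm r hrle
      push_cast
      linear_combination g (r:ℤ) * key
    rw [Finset.sum_congr rfl hterm, Finset.sum_range_sub H (m+1)]
    have hHm : H (m+1) = 0 := by
      have hz : Nat.choose (2*m - (m+1)) m = 0 := Nat.choose_eq_zero_of_lt (by omega)
      simp [hH, returnsPMF, hz]
    have hH0 : H 0 = 0 := by
      simp [hH]
      right
      simpa using hg
    rw [hHm, hH0]
    ring
  · -- converse
    intro hint
    set q : ℕ → ℝ := fun r => (ν {(r:ℤ)}).toReal with hqdef
    have hrec : ∀ j : ℕ, j < m → (2*(m:ℝ) - 2*j) * q j = (2*(m:ℝ) - j) * q (j+1) := by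
      intro j hj
      set g : ℤ → ℝ := fun k => if k = (j:ℤ) then 1 else 0 with hgdef
      have hg : g (-1) = 0 := by
        simp only [hgdef]
        rw [if_neg (by omega)]
      have h0 := hint g hg
      rw [integral_eq_sum m ν hsupp] at h0
      have hterm : ∀ r ∈ range (m+1),
          (ν {(r:ℤ)}).toReal * ((2*(m:ℝ) - ((r:ℤ):ℝ) + 1) * (g (r:ℤ) - g ((r:ℤ)-1))
            - (((r:ℤ):ℝ) + 1) * g (r:ℤ))
          = (if r = j then (2*(m:ℝ) - 2*j) * q j else 0)
            + (if r = j+1 then -((2*(m:ℝ) - j) * q (j+1)) else 0) := by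
        intro r _
        by_cases h1 : r = j
        · subst h1
          rw [if_pos rfl, if_neg (by omega)]
          have e1 : g ((r:ℤ)) = 1 := by simp [hgdef]
          have e2 : g ((r:ℤ) - 1) = 0 := by simp only [hgdef]; rw [if_neg (by omega)]
          rw [e1, e2]
          simp only [hqdef]
          push_cast
          ring
        · by_cases h2 : r = j + 1
          · subst h2
            rw [if_neg h1, if_pos rfl]
            have e1 : g (((j+1:ℕ)):ℤ) = 0 := by simp only [hgdef]; rw [if_neg (by omega)]
            have e2 : g ((((j+1:ℕ)):ℤ) - 1) = 1 := by simp only [hgdef]; rw [if_pos (by omega)]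
            rw [e1, e2]
            have hc2 : ((((j+1:ℕ)):ℤ):ℝ) = (j:ℝ)+1 := by push_cast; ring
            rw [hc2]
            simp only [hqdef]
            ring
          · rw [if_neg h1, if_neg h2]
            simp only [hgdef]
            rw [if_neg (by omega), if_neg (by omega)]
            ring
      rw [Finset.sum_congr rfl hterm, Finset.sum_add_distrib,
        Finset.sum_ite_eq' (range (m+1)) j, Finset.sum_ite_eq' (range (m+1)) (j+1),
        if_pos (by rw [Finset.mem_range]; omega), if_pos (by rw [Finset.mem_range]; omega)] at h0
      linarith
    have hp0 : returnsPMF m 0 ≠ 0 := by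
      have : 0 < Nat.choose (2*m - 0) m := Nat.choose_pos (by omega)
      rw [returnsPMF]
      positivity
    have hqp : ∀ r : ℕ, r ≤ m → q r * returnsPMF m 0 = q 0 * returnsPMF m r := by
      intro r
      induction r with
      | zero => intro _; ring
      | succ r ih =>
        intro hr
        have hrm : r < m := by omega
        have ihr := ih (by omega)
        have h1 := hrec r hrm
        have h2 := pmf_rec m hm r (by omega)
        have hne : (2*(m:ℝ) - r) ≠ 0 := by
          have : (r:ℝ) < m := by exact_mod_cast hrm
          have hm' : (0:ℝ) < m := by exact_mod_cast hm
          nlinarith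
        apply mul_left_cancel₀ hne
        calc (2*(m:ℝ) - r) * (q (r+1) * returnsPMF m 0)
            = ((2*(m:ℝ) - r) * q (r+1)) * returnsPMF m 0 := by ring
          _ = ((2*(m:ℝ) - 2*r) * q r) * returnsPMF m 0 := by rw [← h1]
          _ = (2*(m:ℝ) - 2*r) * (q r * returnsPMF m 0) := by ring
          _ = (2*(m:ℝ) - 2*r) * (q 0 * returnsPMF m r) := by rw [ihr]
          _ = q 0 * ((2*(m:ℝ) - 2*r) * returnsPMF m r) := by ring
          _ = q 0 * ((2*(m:ℝ) - r) * returnsPMF m (r+1)) := by rw [h2]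
          _ = (2*(m:ℝ) - r) * (q 0 * returnsPMF m (r+1)) := by ring
    have hsum : ∑ r ∈ range (m+1), q r = 1 := by
      have h1 := integral_eq_sum m ν hsupp (fun _ => (1:ℝ))
      simp only [integral_const, measure_univ, ENNReal.toReal_one, probReal_univ, smul_eq_mul, one_mul,
        mul_one] at h1
      exact h1.symm
    have hq0 : q 0 = returnsPMF m 0 := by
      have h1 : ∑ r ∈ range (m+1), q r * returnsPMF m 0
          = ∑ r ∈ range (m+1), q 0 * returnsPMF m r := by
        refine Finset.sum_congr rfl fun r hr => ?_
        rw [Finset.mem_range] at hr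
        exact hqp r (by omega)
      rw [← Finset.sum_mul, hsum, one_mul, ← Finset.mul_sum, sum_returnsPMF, mul_one] at h1
      exact h1.symm
    intro r hr
    have h3 := hqp r hr
    rw [hq0] at h3
    have h4 : q r * returnsPMF m 0 = returnsPMF m r * returnsPMF m 0 := by rw [h3]; ring
    exact mul_right_cancel₀ hp0 h4
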